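/- In the Heisenberg group H(ℝ), for every positive integer n the set of subgroups Δ with c(H(ℤ), Δ) = n is finite, where c(A,B) = [A : A ∩ B]·[B : A ∩ B]. -/

import Mathlib

/-- The Heisenberg group over a commutative ring `R`: upper unitriangular 3×3
matrices, recorded by their off-diagonal entries `x` (entry (1,2)),
`y` (entry (2,3)) and `z` (entry (1,3)). -/
@[ext]
structure Heis (R : Type*) where
  x : R
  y : R
  z : R

namespace Heis

variable {R : Type*} [CommRing R]

instance : Mul (Heis R) := ⟨fun a b => ⟨a.x + b.x, a.y + b.y, a.z + b.z + a.x * b.y⟩⟩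
instance : One (Heis R) := ⟨⟨0, 0, 0⟩⟩
instance : Inv (Heis R) := ⟨fun a => ⟨-a.x, -a.y, -a.z + a.x * a.y⟩⟩

@[simp] theorem mul_x (a b : Heis R) : (a * b).x = a.x + b.x := rfl
@[simp] theorem mul_y (a b : Heis R) : (a * b).y = a.y + b.y := rfl
@[simp] theorem mul_z (a b : Heis R) : (a * b).z = a.z + b.z + a.x * b.y := rfl
@[simp] theorem one_x : (1 : Heis R).x = 0 := rfl
@[simp] theorem one_y : (1 : Heis R).y = 0 := rfl
@[simp] theorem one_z : (1 : Heis R).z = 0 := rfl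
@[simp] theorem inv_x (a : Heis R) : a⁻¹.x = -a.x := rfl
@[simp] theorem inv_y (a : Heis R) : a⁻¹.y = -a.y := rfl
@[simp] theorem inv_z (a : Heis R) : a⁻¹.z = -a.z + a.x * a.y := rfl

instance : Group (Heis R) where
  mul_assoc a b c := by ext <;> simp <;> ring
  one_mul a := by ext <;> simp
  mul_one a := by ext <;> simp
  inv_mul_cancel a := by ext <;> simp

end Heis

/-- The integral Heisenberg lattice `H(ℤ)` inside `H(ℝ)`. -/
def HeisZ : Subgroup (Heis ℝ) where
  carrier := {a | (∃ m : ℤ, (m : ℝ) = a.x) ∧ (∃ m : ℤ, (m : ℝ) = a.y) ∧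
    ∃ m : ℤ, (m : ℝ) = a.z}
  one_mem' := ⟨⟨0, by simp⟩, ⟨0, by simp⟩, ⟨0, by simp⟩⟩
  mul_mem' := by
    rintro a b ⟨⟨ax, hax⟩, ⟨ay, hay⟩, ⟨az, haz⟩⟩ ⟨⟨bx, hbx⟩, ⟨by', hby⟩, ⟨bz, hbz⟩⟩
    exact ⟨⟨ax + bx, by push_cast; rw [hax, hbx]; simp⟩,
      ⟨ay + by', by push_cast; rw [hay, hby]; simp⟩,
      ⟨az + bz + ax * by', by push_cast; rw [haz, hbz, hax, hby]; simp⟩⟩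
  inv_mem' := by
    rintro a ⟨⟨ax, hax⟩, ⟨ay, hay⟩, ⟨az, haz⟩⟩
    exact ⟨⟨-ax, by push_cast; rw [hax]; simp⟩, ⟨-ay, by push_cast; rw [hay]; simp⟩,
      ⟨-az + ax * ay, by push_cast; rw [haz, hax, hay]; simp⟩⟩


namespace HeisAux

open Subgroup

/-- powers in the Heisenberg group -/
theorem pow_x (a : Heis ℝ) (k : ℕ) : (a ^ k).x = k * a.x := by
  induction k with
  | zero => simp
  | succ k ih => rw [pow_succ]; simp [ih]; push_cast; ring

theorem pow_y (a : Heis ℝ) (k : ℕ) : (a ^ k).y = k * a.y := by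
  induction k with
  | zero => simp
  | succ k ih => rw [pow_succ]; simp [ih]; push_cast; ring

theorem pow_z (a : Heis ℝ) (k : ℕ) :
    (a ^ k).z = k * a.z + ((k : ℝ) * ((k : ℝ) - 1) / 2) * (a.x * a.y) := by
  induction k with
  | zero => simp
  | succ k ih => rw [pow_succ]; simp [ih, pow_x]; push_cast; ring

/-- the subgroup of `H(ℝ)` with all entries in `sℤ`. -/
def HeisP (s : ℕ) : Subgroup (Heis ℝ) where
  carrier := {a | (∃ m : ℤ, (s : ℝ) * m = a.x) ∧ (∃ m : ℤ, (s : ℝ) * m = a.y) ∧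
    ∃ m : ℤ, (s : ℝ) * m = a.z}
  one_mem' := ⟨⟨0, by simp⟩, ⟨0, by simp⟩, ⟨0, by simp⟩⟩
  mul_mem' := by
    rintro a b ⟨⟨ax, hax⟩, ⟨ay, hay⟩, ⟨az, haz⟩⟩ ⟨⟨bx, hbx⟩, ⟨by', hby⟩, ⟨bz, hbz⟩⟩
    refine ⟨⟨ax + bx, ?_⟩, ⟨ay + by', ?_⟩, ⟨az + bz + s * ax * by', ?_⟩⟩
    · simp only [Heis.mul_x]; push_cast; linear_combination hax + hbx
    · simp only [Heis.mul_y]; push_cast; linear_combination hay + hby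
    · simp only [Heis.mul_z]; push_cast
      linear_combination haz + hbz + b.y * hax + (s : ℝ) * (ax : ℝ) * hby
  inv_mem' := by
    rintro a ⟨⟨ax, hax⟩, ⟨ay, hay⟩, ⟨az, haz⟩⟩
    refine ⟨⟨-ax, ?_⟩, ⟨-ay, ?_⟩, ⟨-az + s * ax * ay, ?_⟩⟩
    · simp only [Heis.inv_x]; push_cast; linear_combination -hax
    · simp only [Heis.inv_y]; push_cast; linear_combination -hay
    · simp only [Heis.inv_z]; push_cast
      linear_combination -haz + a.y * hax + (s : ℝ) * (ax : ℝ) * hay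

theorem mem_HeisP {s : ℕ} {a : Heis ℝ} : a ∈ HeisP s ↔
    (∃ m : ℤ, (s : ℝ) * m = a.x) ∧ (∃ m : ℤ, (s : ℝ) * m = a.y) ∧
    ∃ m : ℤ, (s : ℝ) * m = a.z := Iff.rfl

/-- the subgroup of `H(ℝ)` with `x, y ∈ (1/N)ℤ` and `z ∈ (1/N²)ℤ`. -/
def HeisG (N : ℕ) : Subgroup (Heis ℝ) where
  carrier := {a | (∃ m : ℤ, (m : ℝ) = N * a.x) ∧ (∃ m : ℤ, (m : ℝ) = N * a.y) ∧
    ∃ m : ℤ, (m : ℝ) = (N : ℝ) ^ 2 * a.z}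
  one_mem' := ⟨⟨0, by simp⟩, ⟨0, by simp⟩, ⟨0, by simp⟩⟩
  mul_mem' := by
    rintro a b ⟨⟨ax, hax⟩, ⟨ay, hay⟩, ⟨az, haz⟩⟩ ⟨⟨bx, hbx⟩, ⟨by', hby⟩, ⟨bz, hbz⟩⟩
    refine ⟨⟨ax + bx, ?_⟩, ⟨ay + by', ?_⟩, ⟨az + bz + ax * by', ?_⟩⟩
    · simp only [Heis.mul_x]; push_cast; linear_combination hax + hbx
    · simp only [Heis.mul_y]; push_cast; linear_combination hay + hby
    · simp only [Heis.mul_z]; push_cast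
      linear_combination haz + hbz + (by' : ℝ) * hax + (N : ℝ) * a.x * hby
  inv_mem' := by
    rintro a ⟨⟨ax, hax⟩, ⟨ay, hay⟩, ⟨az, haz⟩⟩
    refine ⟨⟨-ax, ?_⟩, ⟨-ay, ?_⟩, ⟨-az + ax * ay, ?_⟩⟩
    · simp only [Heis.inv_x]; push_cast; linear_combination -hax
    · simp only [Heis.inv_y]; push_cast; linear_combination -hay
    · simp only [Heis.inv_z]; push_cast
      linear_combination -haz + (ay : ℝ) * hax + (N : ℝ) * a.x * hay

theorem mem_HeisG {N : ℕ} {a : Heis ℝ} : a ∈ HeisG N ↔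
    (∃ m : ℤ, (m : ℝ) = N * a.x) ∧ (∃ m : ℤ, (m : ℝ) = N * a.y) ∧
    ∃ m : ℤ, (m : ℝ) = (N : ℝ) ^ 2 * a.z := Iff.rfl

/-- an invariant that separates cosets of `HeisP s` in `HeisG N`. -/
noncomputable def fG (s N : ℕ) (g : ↥(HeisG N)) :
    ZMod (s * N) × ZMod (s * N ^ 2) × ZMod (s * N ^ 2) :=
  (((mem_HeisG.mp g.2).1.choose : ZMod (s * N)),
   ((mem_HeisG.mp g.2).2.1.choose : ZMod (s * N ^ 2)),
   ((mem_HeisG.mp g.2).2.2.choose : ZMod (s * N ^ 2)))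

theorem fG_key {s N : ℕ} (hN : 0 < N) {g g' : ↥(HeisG N)}
    (h : fG s N g = fG s N g') :
    g⁻¹ * g' ∈ (HeisP s).subgroupOf (HeisG N) := by
  have hNR : (N : ℝ) ≠ 0 := Nat.cast_ne_zero.mpr hN.ne'
  unfold fG at h
  rw [Prod.mk.injEq, Prod.mk.injEq] at h
  obtain ⟨h1, h2, h3⟩ := h
  set m1 := (mem_HeisG.mp g.2).1.choose with hm1def
  set m2 := (mem_HeisG.mp g.2).2.1.choose with hm2def
  set m3 := (mem_HeisG.mp g.2).2.2.choose with hm3def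
  set p1 := (mem_HeisG.mp g'.2).1.choose with hp1def
  set p2 := (mem_HeisG.mp g'.2).2.1.choose with hp2def
  set p3 := (mem_HeisG.mp g'.2).2.2.choose with hp3def
  have hg1 : (m1 : ℝ) = N * (g : Heis ℝ).x := (mem_HeisG.mp g.2).1.choose_spec
  have hg2 : (m2 : ℝ) = N * (g : Heis ℝ).y := (mem_HeisG.mp g.2).2.1.choose_spec
  have hg3 : (m3 : ℝ) = (N : ℝ) ^ 2 * (g : Heis ℝ).z := (mem_HeisG.mp g.2).2.2.choose_spec
  have hh1 : (p1 : ℝ) = N * (g' : Heis ℝ).x := (mem_HeisG.mp g'.2).1.choose_spec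
  have hh2 : (p2 : ℝ) = N * (g' : Heis ℝ).y := (mem_HeisG.mp g'.2).2.1.choose_spec
  have hh3 : (p3 : ℝ) = (N : ℝ) ^ 2 * (g' : Heis ℝ).z := (mem_HeisG.mp g'.2).2.2.choose_spec
  obtain ⟨k1, hk1⟩ : ((s * N : ℕ) : ℤ) ∣ p1 - m1 :=
    ((ZMod.intCast_eq_intCast_iff _ _ _).mp h1).dvd
  obtain ⟨k2, hk2⟩ : ((s * N ^ 2 : ℕ) : ℤ) ∣ p2 - m2 :=
    ((ZMod.intCast_eq_intCast_iff _ _ _).mp h2).dvd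
  obtain ⟨k3, hk3⟩ : ((s * N ^ 2 : ℕ) : ℤ) ∣ p3 - m3 :=
    ((ZMod.intCast_eq_intCast_iff _ _ _).mp h3).dvd
  have hk1R : (p1 : ℝ) - m1 = (s : ℝ) * N * k1 := by exact_mod_cast congrArg (Int.cast : ℤ → ℝ) hk1
  have hk2R : (p2 : ℝ) - m2 = (s : ℝ) * (N : ℝ) ^ 2 * k2 := by
    exact_mod_cast congrArg (Int.cast : ℤ → ℝ) hk2
  have hk3R : (p3 : ℝ) - m3 = (s : ℝ) * (N : ℝ) ^ 2 * k3 := by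
    exact_mod_cast congrArg (Int.cast : ℤ → ℝ) hk3
  -- real consequences
  have e1 : (g' : Heis ℝ).x - (g : Heis ℝ).x = (s : ℝ) * k1 := by
    apply mul_left_cancel₀ hNR
    linear_combination hk1R + hg1 - hh1
  have e2 : (g' : Heis ℝ).y - (g : Heis ℝ).y = (s : ℝ) * (N * k2) := by
    apply mul_left_cancel₀ hNR
    linear_combination hk2R + hg2 - hh2
  have e3 : (g' : Heis ℝ).z - (g : Heis ℝ).z = (s : ℝ) * k3 := by
    apply mul_left_cancel₀ (pow_ne_zero 2 hNR)
    linear_combination hk3R + hg3 - hh3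
  rw [Subgroup.mem_subgroupOf]
  have hco : ((g⁻¹ * g' : ↥(HeisG N)) : Heis ℝ) = (g : Heis ℝ)⁻¹ * (g' : Heis ℝ) := rfl
  rw [hco, mem_HeisP]
  refine ⟨⟨k1, ?_⟩, ⟨N * k2, ?_⟩, ⟨k3 - m1 * k2, ?_⟩⟩
  · simp only [Heis.mul_x, Heis.inv_x]; linear_combination -e1
  · simp only [Heis.mul_y, Heis.inv_y]; push_cast; linear_combination -e2
  · simp only [Heis.mul_z, Heis.inv_z, Heis.inv_x]
    push_cast
    linear_combination -e3 + ((g : Heis ℝ)).x * e2 - (s : ℝ) * (k2 : ℝ) * hg1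

theorem finiteQuot {s N : ℕ} (hs : 0 < s) (hN : 0 < N) :
    Finite (↥(HeisG N) ⧸ (HeisP s).subgroupOf (HeisG N)) := by
  classical
  haveI : NeZero (s * N) := ⟨by positivity⟩
  haveI : NeZero (s * N ^ 2) := ⟨by positivity⟩
  refine Finite.of_surjective
    (fun v : ZMod (s * N) × ZMod (s * N ^ 2) × ZMod (s * N ^ 2) =>
      if h : ∃ g : ↥(HeisG N), fG s N g = v then
        (QuotientGroup.mk h.choose : ↥(HeisG N) ⧸ (HeisP s).subgroupOf (HeisG N))
      else QuotientGroup.mk 1) ?_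
  intro q
  induction q using QuotientGroup.induction_on with
  | H g =>
    refine ⟨fG s N g, ?_⟩
    have hex : ∃ g' : ↥(HeisG N), fG s N g' = fG s N g := ⟨g, rfl⟩
    simp only [dif_pos hex]
    exact (QuotientGroup.eq).mpr (fG_key hN hex.choose_spec)

theorem betweenFinite {s N : ℕ} (hs : 0 < s) (hN : 0 < N) :
    {Δ : Subgroup (Heis ℝ) | HeisP s ≤ Δ ∧ Δ ≤ HeisG N}.Finite := by
  have hfin : Finite (↥(HeisG N) ⧸ (HeisP s).subgroupOf (HeisG N)) := finiteQuot hs hN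
  rw [← Set.finite_coe_iff]
  refine Finite.of_injective
    (fun Δ : {Δ : Subgroup (Heis ℝ) | HeisP s ≤ Δ ∧ Δ ≤ HeisG N} =>
      (QuotientGroup.mk '' ((Δ.1.subgroupOf (HeisG N) : Subgroup ↥(HeisG N)) : Set ↥(HeisG N)) :
        Set (↥(HeisG N) ⧸ (HeisP s).subgroupOf (HeisG N)))) ?_
  have key : ∀ A B : {Δ : Subgroup (Heis ℝ) | HeisP s ≤ Δ ∧ Δ ≤ HeisG N},
      (QuotientGroup.mk '' ((A.1.subgroupOf (HeisG N) : Subgroup ↥(HeisG N)) : Set ↥(HeisG N)) :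
        Set (↥(HeisG N) ⧸ (HeisP s).subgroupOf (HeisG N))) =
      QuotientGroup.mk '' ((B.1.subgroupOf (HeisG N) : Subgroup ↥(HeisG N)) : Set ↥(HeisG N)) →
      A.1 ≤ B.1 := by
    intro A B hAB x hx
    have hxG : x ∈ HeisG N := A.2.2 hx
    have hmem : (QuotientGroup.mk (⟨x, hxG⟩ : ↥(HeisG N)) :
        ↥(HeisG N) ⧸ (HeisP s).subgroupOf (HeisG N)) ∈
        (QuotientGroup.mk '' ((B.1.subgroupOf (HeisG N) : Subgroup ↥(HeisG N)) :
          Set ↥(HeisG N))) := by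
      rw [← hAB]
      exact ⟨⟨x, hxG⟩, by simpa [Subgroup.mem_subgroupOf] using hx, rfl⟩
    obtain ⟨g2, hg2mem, hg2eq⟩ := hmem
    have hP : g2⁻¹ * ⟨x, hxG⟩ ∈ (HeisP s).subgroupOf (HeisG N) := (QuotientGroup.eq).mp hg2eq
    have h1 : ((g2⁻¹ * ⟨x, hxG⟩ : ↥(HeisG N)) : Heis ℝ) ∈ B.1 :=
      B.2.1 (Subgroup.mem_subgroupOf.mp hP)
    have h2 : (g2 : Heis ℝ) ∈ B.1 := hg2mem
    have hxe : x = (g2 : Heis ℝ) * ((g2⁻¹ * ⟨x, hxG⟩ : ↥(HeisG N)) : Heis ℝ) := by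
      push_cast
      group
    rw [hxe]
    exact mul_mem h2 h1
  intro A B h
  exact Subtype.ext (le_antisymm (key A B h) (key B A h.symm))

end HeisAux

/-- In the Heisenberg group `H(ℝ)`, for every positive integer `n` the set of
subgroups `Δ` with commensurability index
`c(H(ℤ), Δ) = [H(ℤ) : H(ℤ) ∩ Δ]·[Δ : H(ℤ) ∩ Δ] = n` is finite. -/
theorem heisenberg_commensurable_subgroups_finite (n : ℕ) (hn : 0 < n) :
    {Δ : Subgroup (Heis ℝ) |
      Subgroup.relIndex Δ HeisZ * Subgroup.relIndex HeisZ Δ = n}.Finite := by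
  classical
  set s := n.factorial with hsdef
  have hs : 0 < s := n.factorial_pos
  have hN : 0 < 2 * s ^ 2 := by positivity
  refine (HeisAux.betweenFinite (N := 2 * s ^ 2) hs hN).subset ?_
  intro Δ hΔ
  simp only [Set.mem_setOf_eq] at hΔ
  have hr1 : Subgroup.relIndex Δ HeisZ ≠ 0 := by
    intro h; rw [h, zero_mul] at hΔ; omega
  have hr2 : Subgroup.relIndex HeisZ Δ ≠ 0 := by
    intro h; rw [h, mul_zero] at hΔ; omega
  have hd1 : Subgroup.relIndex Δ HeisZ ≤ n :=
    Nat.le_of_dvd hn ⟨_, hΔ.symm⟩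
  have hd2 : Subgroup.relIndex HeisZ Δ ≤ n :=
    Nat.le_of_dvd hn ⟨_, by rw [mul_comm] at hΔ; exact hΔ.symm⟩
  have hfac1 : ∀ m, 0 < m → m ≤ Subgroup.relIndex Δ HeisZ → m ∣ s :=
    fun m hm hle => Nat.dvd_factorial hm (hle.trans hd1)
  have hfac2 : ∀ m, 0 < m → m ≤ Subgroup.relIndex HeisZ Δ → m ∣ s :=
    fun m hm hle => Nat.dvd_factorial hm (hle.trans hd2)
  constructor
  · -- HeisP s ≤ Δ
    intro a ha
    obtain ⟨⟨m1, h1⟩, ⟨m2, h2⟩, ⟨m3, h3⟩⟩ := HeisAux.mem_HeisP.mp ha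
    set g1 : Heis ℝ := ⟨(m1 : ℝ), 0, 0⟩ with hg1def
    set g2 : Heis ℝ := ⟨0, (m2 : ℝ), 0⟩ with hg2def
    set g3 : Heis ℝ := ⟨0, 0, ((m3 - (s : ℤ) * m1 * m2 : ℤ) : ℝ)⟩ with hg3def
    have hg1m : g1 ∈ HeisZ := ⟨⟨m1, rfl⟩, ⟨0, by simp [hg1def]⟩, ⟨0, by simp [hg1def]⟩⟩
    have hg2m : g2 ∈ HeisZ := ⟨⟨0, by simp [hg2def]⟩, ⟨m2, rfl⟩, ⟨0, by simp [hg2def]⟩⟩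
    have hg3m : g3 ∈ HeisZ := ⟨⟨0, by simp [hg3def]⟩, ⟨0, by simp [hg3def]⟩,
      ⟨m3 - (s : ℤ) * m1 * m2, rfl⟩⟩
    have hp1 : g1 ^ s ∈ Δ ⊓ HeisZ :=
      Subgroup.pow_mem_of_relIndex_ne_zero_of_dvd hr1 hg1m hfac1
    have hp2 : g2 ^ s ∈ Δ ⊓ HeisZ :=
      Subgroup.pow_mem_of_relIndex_ne_zero_of_dvd hr1 hg2m hfac1
    have hp3 : g3 ^ s ∈ Δ ⊓ HeisZ :=
      Subgroup.pow_mem_of_relIndex_ne_zero_of_dvd hr1 hg3m hfac1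
    have heq : g1 ^ s * g2 ^ s * g3 ^ s = a := by
      ext
      · simp only [Heis.mul_x, HeisAux.pow_x, hg1def, hg2def, hg3def]
        linear_combination h1
      · simp only [Heis.mul_y, HeisAux.pow_y, hg1def, hg2def, hg3def]
        linear_combination h2
      · simp only [Heis.mul_z, Heis.mul_x, Heis.mul_y, HeisAux.pow_x, HeisAux.pow_y,
          HeisAux.pow_z, hg1def, hg2def, hg3def]
        push_cast
        linear_combination h3
    exact heq ▸ mul_mem (mul_mem hp1.1 hp2.1) hp3.1
  · -- Δ ≤ HeisG (2 * s ^ 2)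
    intro d hd
    have hds : d ^ s ∈ HeisZ ⊓ Δ :=
      Subgroup.pow_mem_of_relIndex_ne_zero_of_dvd hr2 hd hfac2
    obtain ⟨⟨m1, h1⟩, ⟨m2, h2⟩, ⟨m3, h3⟩⟩ := hds.1
    rw [HeisAux.pow_x] at h1
    rw [HeisAux.pow_y] at h2
    rw [HeisAux.pow_z] at h3
    rw [HeisAux.mem_HeisG]
    refine ⟨⟨2 * (s : ℤ) * m1, ?_⟩, ⟨2 * (s : ℤ) * m2, ?_⟩,
      ⟨4 * (s : ℤ) ^ 3 * m3 - 2 * (s : ℤ) ^ 2 * ((s : ℤ) - 1) * m1 * m2, ?_⟩⟩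
    · push_cast
      linear_combination 2 * (s : ℝ) * h1
    · push_cast
      linear_combination 2 * (s : ℝ) * h2
    · push_cast
      linear_combination 4 * (s : ℝ) ^ 3 * h3
        - 2 * (s : ℝ) ^ 2 * ((s : ℝ) - 1) * ((m2 : ℝ) * h1 + (s : ℝ) * d.x * h2)
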